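/- Let Z ⊂ ℝ^d be finite with a unique maximizer z* of z ↦ ⟨θ, z⟩, let X ⊂ ℝ^d be finite spanning ℝ^d, and for λ in the simplex over X let A(λ) = Σ_x λ_x x xᵀ. Define ρ*(λ) = max_{z∈Z\{z*}} ‖z*−z‖²_{A(λ)^{-1}} / ⟨θ, z*−z⟩² and γ*(λ) = (E_{η∼N(0,I)}[ max_{z∈Z\{z*}} ⟨z*−z, A(λ)^{-1/2}η⟩ / ⟨θ, z*−z⟩ ])². Then γ*(λ) ≤ d · ρ*(λ) for every λ with A(λ) invertible. -/

import Mathlib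

open MeasureTheory ProbabilityTheory Matrix Real

section Aux

lemma gpdf_eq (x : ℝ) :
    gaussianPDFReal 0 1 x = (Real.sqrt (2 * π))⁻¹ * Real.exp (-2⁻¹ * x ^ 2) := by
  simp only [gaussianPDFReal, NNReal.coe_one, mul_one, sub_zero]
  congr 1
  ring

lemma gauss_eq :
    gaussianReal 0 1
      = (volume : Measure ℝ).withDensity fun x => ((gaussianPDFReal 0 1 x).toNNReal : ENNReal) := by
  rw [gaussianReal_of_var_ne_zero 0 one_ne_zero]
  rfl

lemma integral_gauss (g : ℝ → ℝ) :
    ∫ x, g x ∂(gaussianReal 0 1) = ∫ x, gaussianPDFReal 0 1 x * g x := by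
  rw [gauss_eq,
    integral_withDensity_eq_integral_smul ((measurable_gaussianPDFReal 0 1).real_toNNReal) g]
  refine integral_congr_ae (Filter.Eventually.of_forall fun x => ?_)
  simp [NNReal.smul_def, Real.coe_toNNReal _ (gaussianPDFReal_nonneg 0 1 x)]

lemma integrable_gauss {g : ℝ → ℝ}
    (h : Integrable (fun x => gaussianPDFReal 0 1 x * g x) volume) :
    Integrable g (gaussianReal 0 1) := by
  rw [gauss_eq,
    integrable_withDensity_iff_integrable_smul ((measurable_gaussianPDFReal 0 1).real_toNNReal)]
  refine h.congr (Filter.Eventually.of_forall fun x => ?_)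
  simp [NNReal.smul_def, Real.coe_toNNReal _ (gaussianPDFReal_nonneg 0 1 x)]

lemma int_vol_mul (g : ℝ → ℝ)
    (hg : Integrable (fun x => g x * Real.exp (-2⁻¹ * x ^ 2)) volume) :
    Integrable (fun x => gaussianPDFReal 0 1 x * g x) volume := by
  have h : (fun x => gaussianPDFReal 0 1 x * g x)
      = fun x => (Real.sqrt (2 * π))⁻¹ * (g x * Real.exp (-2⁻¹ * x ^ 2)) := by
    funext x; rw [gpdf_eq]; ring
  rw [h]
  exact hg.const_mul _

lemma integrable_id_gauss : Integrable (fun x : ℝ => x) (gaussianReal 0 1) := by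
  refine integrable_gauss (int_vol_mul _ ?_)
  exact integrable_mul_exp_neg_mul_sq (by norm_num : (0:ℝ) < 2⁻¹)

lemma integrable_sq_vol : Integrable (fun x : ℝ => x ^ 2 * Real.exp (-2⁻¹ * x ^ 2)) volume := by
  have h := integrable_rpow_mul_exp_neg_mul_sq (b := 2⁻¹) (by norm_num)
    (s := ((2:ℕ):ℝ)) (by norm_num)
  simpa [Real.rpow_natCast] using h

lemma integrable_sq_gauss : Integrable (fun x : ℝ => x ^ 2) (gaussianReal 0 1) :=
  integrable_gauss (int_vol_mul _ integrable_sq_vol)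

lemma integral_id_gauss : ∫ x, x ∂(gaussianReal 0 1) = 0 := by
  rw [integral_gauss]
  have hodd : ∀ x : ℝ, gaussianPDFReal 0 1 (-x) * (-x) = -(gaussianPDFReal 0 1 x * x) := by
    intro x
    rw [gpdf_eq, gpdf_eq, neg_sq]
    ring
  have h := integral_neg_eq_self (fun x => gaussianPDFReal 0 1 x * x) volume
  have h2 : (fun x => gaussianPDFReal 0 1 (-x) * (-x))
      = fun x => -(gaussianPDFReal 0 1 x * x) := funext hodd
  rw [h2, integral_neg] at h
  linarith

lemma integral_exp_vol : ∫ x : ℝ, Real.exp (-2⁻¹ * x ^ 2) = Real.sqrt (2 * π) := by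
  rw [integral_gaussian, show π / (2⁻¹:ℝ) = 2 * π from by ring]

lemma integral_sq_vol' : ∫ x : ℝ, x * (x * Real.exp (-2⁻¹ * x ^ 2)) = Real.sqrt (2 * π) := by
  have hu : ∀ x : ℝ, HasDerivAt (fun y : ℝ => y) 1 x := fun x => hasDerivAt_id x
  have hv : ∀ x : ℝ, HasDerivAt (fun y : ℝ => -Real.exp (-2⁻¹ * y ^ 2))
      (x * Real.exp (-2⁻¹ * x ^ 2)) x := by
    intro x
    have h1 : HasDerivAt (fun y : ℝ => -2⁻¹ * y ^ 2) (-2⁻¹ * (2 * x ^ 1)) x :=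
      (hasDerivAt_pow 2 x).const_mul (-2⁻¹)
    have h2 : HasDerivAt (fun y : ℝ => -Real.exp (-2⁻¹ * y ^ 2)) _ x := h1.exp.neg
    convert h2 using 1
    ring
  have hIv' : Integrable (fun x : ℝ => x * (x * Real.exp (-2⁻¹ * x ^ 2))) volume := by
    have h : (fun x : ℝ => x * (x * Real.exp (-2⁻¹ * x ^ 2)))
        = fun x => x ^ 2 * Real.exp (-2⁻¹ * x ^ 2) := by funext x; ring
    rw [h]; exact integrable_sq_vol
  have hI1 : Integrable (fun x : ℝ => 1 * -Real.exp (-2⁻¹ * x ^ 2)) volume := by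
    have h : (fun x : ℝ => 1 * -Real.exp (-2⁻¹ * x ^ 2))
        = fun x => -(Real.exp (-2⁻¹ * x ^ 2)) := by funext x; ring
    rw [h]; exact (integrable_exp_neg_mul_sq (by norm_num : (0:ℝ) < 2⁻¹)).neg
  have hIuv : Integrable (fun x : ℝ => x * -Real.exp (-2⁻¹ * x ^ 2)) volume := by
    have h : (fun x : ℝ => x * -Real.exp (-2⁻¹ * x ^ 2))
        = fun x => -(x * Real.exp (-2⁻¹ * x ^ 2)) := by funext x; ring
    rw [h]; exact (integrable_mul_exp_neg_mul_sq (by norm_num : (0:ℝ) < 2⁻¹)).neg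
  have key := MeasureTheory.integral_mul_deriv_eq_deriv_mul_of_integrable (fun x _ => hu x) (fun x _ => hv x) hIv' hI1 hIuv
  rw [key]
  have h : (∫ x : ℝ, 1 * -Real.exp (-2⁻¹ * x ^ 2)) = -Real.sqrt (2 * π) := by
    have h2 : (fun x : ℝ => 1 * -Real.exp (-2⁻¹ * x ^ 2))
        = fun x => -(Real.exp (-2⁻¹ * x ^ 2)) := by funext x; ring
    rw [h2, integral_neg, integral_exp_vol]
  rw [h, neg_neg]

lemma integral_sq_gauss : ∫ x, x ^ 2 ∂(gaussianReal 0 1) = 1 := by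
  rw [integral_gauss]
  have h : (fun x => gaussianPDFReal 0 1 x * x ^ 2)
      = fun x => (Real.sqrt (2 * π))⁻¹ * (x * (x * Real.exp (-2⁻¹ * x ^ 2))) := by
    funext x; rw [gpdf_eq]; ring
  rw [h, integral_const_mul, integral_sq_vol']
  rw [inv_mul_cancel₀]
  positivity

variable {d : ℕ}

lemma map_eval (i : Fin d) :
    (Measure.pi fun _ : Fin d => gaussianReal 0 1).map (fun η => η i) = gaussianReal 0 1 := by
  refine Measure.ext fun s hs => ?_
  rw [Measure.map_apply (measurable_pi_apply i) hs]
  rw [show (fun η : Fin d → ℝ => η i) ⁻¹' s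
      = Set.pi Set.univ (Function.update (fun _ => Set.univ) i s) from Set.eval_preimage,
    Measure.pi_pi]
  rw [Fintype.prod_eq_single i (fun j hj => by rw [Function.update_of_ne hj]; simp)]
  rw [Function.update_self]

lemma integrable_coord {g : ℝ → ℝ} (hgm : Measurable g)
    (hg : Integrable g (gaussianReal 0 1)) (i : Fin d) :
    Integrable (fun η : Fin d → ℝ => g (η i))
      (Measure.pi fun _ : Fin d => gaussianReal 0 1) := by
  have h : Integrable g ((Measure.pi fun _ : Fin d => gaussianReal 0 1).map (fun η => η i)) := by
    rwa [map_eval]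
  exact h.comp_measurable (measurable_pi_apply i)

lemma integral_coord {g : ℝ → ℝ} (hgm : Measurable g) (i : Fin d) :
    ∫ η, g (η i) ∂(Measure.pi fun _ : Fin d => gaussianReal 0 1)
      = ∫ x, g x ∂(gaussianReal 0 1) := by
  conv_rhs => rw [← map_eval i]
  exact (integral_map (measurable_pi_apply i).aemeasurable
    hgm.aestronglyMeasurable).symm

lemma integrable_sup'_aux {α ι : Type*} [MeasurableSpace α] {μ : Measure α}
    (s : Finset ι) (g : ι → α → ℝ) :
    ∀ (hs : s.Nonempty), (∀ i ∈ s, Integrable (g i) μ) →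
      Integrable (fun x => s.sup' hs fun i => g i x) μ := by
  induction s using Finset.cons_induction with
  | empty => intro hs; exact absurd hs (by simp)
  | cons a s ha ih =>
      intro hs hg
      rcases s.eq_empty_or_nonempty with rfl | hne
      · simpa using hg a (by simp)
      · simp only [Finset.sup'_cons hne]
        exact (hg a (by simp)).sup (ih hne fun j hj => hg j (by simp [hj]))

end Aux

/-- `γ*(λ) ≤ d · ρ*(λ)`: the squared Gaussian width objective is at most the
dimension times the worst-case variance objective. -/
theorem gamma_le_dim_mul_rho
    {d : ℕ} (X Z : Finset (Fin d → ℝ)) (θ zs : Fin d → ℝ)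
    (hspan : Submodule.span ℝ (X : Set (Fin d → ℝ)) = ⊤)
    (hzs : zs ∈ Z) (hbest : ∀ z ∈ Z, z ≠ zs → θ ⬝ᵥ z < θ ⬝ᵥ zs)
    (hZ2 : (Z.erase zs).Nonempty)
    (lam : (Fin d → ℝ) → ℝ) (hlam0 : ∀ x ∈ X, 0 ≤ lam x)
    (hlams : ∑ x ∈ X, lam x = 1)
    (A B : Matrix (Fin d) (Fin d) ℝ)
    (hA : A = ∑ x ∈ X, lam x • vecMulVec x x) (hAinv : IsUnit A)
    (hBsymm : B.transpose = B) (hB : B * B = A⁻¹) :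
    (∫ η, (Z.erase zs).sup'
        hZ2 (fun z => (B.mulVec (zs - z)) ⬝ᵥ η / (θ ⬝ᵥ (zs - z)))
        ∂(Measure.pi fun _ : Fin d => gaussianReal 0 1)) ^ 2 ≤
    (d : ℝ) * (Z.erase zs).sup'
        hZ2 (fun z => ((zs - z) ⬝ᵥ (A⁻¹).mulVec (zs - z)) / (θ ⬝ᵥ (zs - z)) ^ 2) := by
  classical
  set μ : Measure (Fin d → ℝ) := Measure.pi fun _ : Fin d => gaussianReal 0 1 with hμ
  set v : (Fin d → ℝ) → (Fin d → ℝ) :=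
    fun z => (θ ⬝ᵥ (zs - z))⁻¹ • B.mulVec (zs - z) with hv
  -- rewrite integrand
  have hFeq : ∀ η : Fin d → ℝ,
      (Z.erase zs).sup' hZ2 (fun z => (B.mulVec (zs - z)) ⬝ᵥ η / (θ ⬝ᵥ (zs - z)))
        = (Z.erase zs).sup' hZ2 (fun z => v z ⬝ᵥ η) := by
    intro η
    refine Finset.sup'_congr hZ2 rfl fun z hz => ?_
    rw [hv, smul_dotProduct, smul_eq_mul, div_eq_inv_mul]
  -- rewrite RHS terms
  have hterm : ∀ z ∈ Z.erase zs,
      ((zs - z) ⬝ᵥ (A⁻¹).mulVec (zs - z)) / (θ ⬝ᵥ (zs - z)) ^ 2 = v z ⬝ᵥ v z := by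
    intro z hz
    have hBB : (B.mulVec (zs - z)) ⬝ᵥ (B.mulVec (zs - z))
        = (zs - z) ⬝ᵥ (A⁻¹).mulVec (zs - z) := by
      have hkey : (B.mulVec (zs - z)) ᵥ* B = (A⁻¹).mulVec (zs - z) := by
        calc (B.mulVec (zs - z)) ᵥ* B = (B.mulVec (zs - z)) ᵥ* Bᵀ := by rw [hBsymm]
          _ = B *ᵥ (B *ᵥ (zs - z)) := vecMul_transpose _ _
          _ = (A⁻¹).mulVec (zs - z) := by rw [mulVec_mulVec, hB]
      rw [dotProduct_mulVec, hkey, dotProduct_comm]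
    rw [hv]
    simp only [smul_dotProduct, dotProduct_smul, smul_eq_mul]
    rw [← hBB, div_eq_mul_inv, sq, mul_inv]
    ring
  -- nonnegativity of self dot products
  have hself : ∀ u : Fin d → ℝ, 0 ≤ u ⬝ᵥ u := fun u =>
    Finset.sum_nonneg fun i _ => mul_self_nonneg (u i)
  set C : ℝ := (Z.erase zs).sup' hZ2 (fun z => v z ⬝ᵥ v z) with hC
  obtain ⟨z0, hz0⟩ := hZ2
  have hCnonneg : 0 ≤ C := by
    rw [hC]
    exact le_trans (hself (v z0)) (Finset.le_sup' (fun z => v z ⬝ᵥ v z) hz0)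
  -- q and h
  set q : (Fin d → ℝ) → ℝ := fun η => ∑ i, (η i) ^ 2 with hqdef
  set h : (Fin d → ℝ) → ℝ := fun η => Real.sqrt (q η) with hhdef
  have hq_nonneg : ∀ η, 0 ≤ q η := fun η => Finset.sum_nonneg fun i _ => sq_nonneg _
  have hq_meas : Measurable q :=
    Finset.measurable_sum _ fun i _ => (measurable_pi_apply i).pow_const 2
  have hh_meas : Measurable h := hq_meas.sqrt
  have hint_sq : ∀ i : Fin d, Integrable (fun η : Fin d → ℝ => (η i) ^ 2) μ := fun i =>
    integrable_coord (g := fun x => x ^ 2) (measurable_id.pow_const 2) integrable_sq_gauss i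
  have hq_int : Integrable q μ := integrable_finset_sum _ fun i _ => hint_sq i
  have hq_integral : ∫ η, q η ∂μ = d := by
    rw [hqdef]
    rw [integral_finset_sum _ fun i _ => hint_sq i]
    have hco : ∀ i : Fin d, ∫ η : Fin d → ℝ, (η i) ^ 2 ∂μ = 1 := fun i => by
      rw [integral_coord (g := fun x => x ^ 2) (measurable_id.pow_const 2) i, integral_sq_gauss]
    simp [hco]
  have hh_sq : ∀ η, h η ^ 2 = q η := fun η => Real.sq_sqrt (hq_nonneg η)
  have hh_int : Integrable h μ := by
    refine Integrable.mono' ((integrable_const (1:ℝ)).add hq_int)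
      hh_meas.aestronglyMeasurable (Filter.Eventually.of_forall fun η => ?_)
    rw [Real.norm_eq_abs, abs_of_nonneg (Real.sqrt_nonneg _)]
    have h1 : q η ≤ (1 + q η) ^ 2 := by nlinarith [hq_nonneg η]
    calc Real.sqrt (q η) ≤ Real.sqrt ((1 + q η) ^ 2) := Real.sqrt_le_sqrt h1
      _ = 1 + q η := Real.sqrt_sq (by nlinarith [hq_nonneg η])
  have hmem : MemLp h 2 μ := by
    refine (memLp_two_iff_integrable_sq hh_meas.aestronglyMeasurable).2 ?_
    refine hq_int.congr (Filter.Eventually.of_forall fun η => (hh_sq η).symm)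
  -- E h ≤ sqrt d
  have hEh : ∫ η, h η ∂μ ≤ Real.sqrt d := by
    have hvar := variance_nonneg h μ
    rw [variance_eq_sub hmem] at hvar
    have h2 : ∫ η, (h ^ 2) η ∂μ = d := by
      have : (h ^ 2 : (Fin d → ℝ) → ℝ) = q := by
        funext η; rw [Pi.pow_apply, hh_sq]
      rw [this, hq_integral]
    rw [h2] at hvar
    have hEnn : 0 ≤ ∫ η, h η ∂μ :=
      integral_nonneg fun η => Real.sqrt_nonneg _
    rw [Real.le_sqrt hEnn (Nat.cast_nonneg d)]
    linarith
  -- dot product integrability and zero mean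
  have hdot_eq : ∀ c : Fin d → ℝ, (fun η : Fin d → ℝ => c ⬝ᵥ η)
      = fun η => ∑ i, c i * η i := fun c => rfl
  have hint_id : ∀ i : Fin d, Integrable (fun η : Fin d → ℝ => η i) μ := fun i =>
    integrable_coord (g := fun x => x) measurable_id integrable_id_gauss i
  have hdot_int : ∀ c : Fin d → ℝ, Integrable (fun η : Fin d → ℝ => c ⬝ᵥ η) μ := by
    intro c
    rw [hdot_eq]
    exact integrable_finset_sum _ fun i _ => (hint_id i).const_mul (c i)
  have hdot_zero : ∀ c : Fin d → ℝ, ∫ η, c ⬝ᵥ η ∂μ = 0 := by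
    intro c
    rw [hdot_eq]
    rw [integral_finset_sum _ fun i _ => (hint_id i).const_mul (c i)]
    refine Finset.sum_eq_zero fun i _ => ?_
    rw [integral_const_mul,
      integral_coord (g := fun x => x) measurable_id i, integral_id_gauss, mul_zero]
  -- integrability of the sup
  set F : (Fin d → ℝ) → ℝ := fun η => (Z.erase zs).sup' ⟨z0, hz0⟩ (fun z => v z ⬝ᵥ η) with hFdef
  have hF_int : Integrable F μ :=
    integrable_sup'_aux _ _ ⟨z0, hz0⟩ (fun z _ => hdot_int (v z))
  -- lower bound: integral nonneg
  have hF_nonneg : 0 ≤ ∫ η, F η ∂μ := by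
    have hmono : ∀ η, v z0 ⬝ᵥ η ≤ F η :=
      fun η => Finset.le_sup' (fun z => v z ⬝ᵥ η) hz0
    have := integral_mono (hdot_int (v z0)) hF_int hmono
    rwa [hdot_zero (v z0)] at this
  -- pointwise upper bound
  have hpt : ∀ η, F η ≤ Real.sqrt C * h η := by
    intro η
    rw [hFdef]
    refine Finset.sup'_le _ _ fun z hz => ?_
    have hcs : (v z ⬝ᵥ η) ^ 2 ≤ (v z ⬝ᵥ v z) * q η := by
      have h1 := Finset.sum_mul_sq_le_sq_mul_sq Finset.univ (v z) η
      have h2 : v z ⬝ᵥ v z = ∑ i, v z i ^ 2 := by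
        simp [dotProduct, sq]
      rw [h2, hqdef]
      exact h1
    calc v z ⬝ᵥ η ≤ |v z ⬝ᵥ η| := le_abs_self _
      _ = Real.sqrt ((v z ⬝ᵥ η) ^ 2) := (Real.sqrt_sq_eq_abs _).symm
      _ ≤ Real.sqrt ((v z ⬝ᵥ v z) * q η) := Real.sqrt_le_sqrt hcs
      _ = Real.sqrt (v z ⬝ᵥ v z) * Real.sqrt (q η) := Real.sqrt_mul (hself _) _
      _ ≤ Real.sqrt C * Real.sqrt (q η) := by
        refine mul_le_mul_of_nonneg_right ?_ (Real.sqrt_nonneg _)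
        refine Real.sqrt_le_sqrt ?_
        rw [hC]
        exact Finset.le_sup' (fun z => v z ⬝ᵥ v z) hz
  -- combine
  have hF_le : ∫ η, F η ∂μ ≤ Real.sqrt C * Real.sqrt d := by
    calc ∫ η, F η ∂μ ≤ ∫ η, Real.sqrt C * h η ∂μ :=
          integral_mono hF_int (hh_int.const_mul _) hpt
      _ = Real.sqrt C * ∫ η, h η ∂μ := integral_const_mul _ _
      _ ≤ Real.sqrt C * Real.sqrt d :=
          mul_le_mul_of_nonneg_left hEh (Real.sqrt_nonneg _)
  have hint_eq : (∫ η, (Z.erase zs).sup'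
      ⟨z0, hz0⟩ (fun z => (B.mulVec (zs - z)) ⬝ᵥ η / (θ ⬝ᵥ (zs - z))) ∂μ) = ∫ η, F η ∂μ := by
    refine integral_congr_ae (Filter.Eventually.of_forall fun η => ?_)
    exact hFeq η
  have hrhs_eq : (Z.erase zs).sup'
      ⟨z0, hz0⟩ (fun z => ((zs - z) ⬝ᵥ (A⁻¹).mulVec (zs - z)) / (θ ⬝ᵥ (zs - z)) ^ 2) = C := by
    rw [hC]
    exact Finset.sup'_congr ⟨z0, hz0⟩ rfl hterm
  rw [hint_eq, hrhs_eq]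
  have hsq : (∫ η, F η ∂μ) ^ 2 ≤ (Real.sqrt C * Real.sqrt d) ^ 2 :=
    pow_le_pow_left₀ hF_nonneg hF_le 2
  calc (∫ η, F η ∂μ) ^ 2 ≤ (Real.sqrt C * Real.sqrt d) ^ 2 := hsq
    _ = C * d := by
        rw [mul_pow, Real.sq_sqrt hCnonneg, Real.sq_sqrt (Nat.cast_nonneg d)]
    _ = d * C := mul_comm _ _
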